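/- Let X be a complex Banach space, P a continuous k-homogeneous polynomial on X with P(x) = T(x,...,x) for a continuous symmetric k-linear map T. Then ‖T‖ ≤ (k^k / k!) · ‖P‖, where ‖T‖ = sup_{‖x_1‖,...,‖x_k‖ ≤ 1} |T(x_1,...,x_k)| and ‖P‖ = sup_{‖x‖ ≤ 1} |P(x)|. -/
import Mathlib

/-- The sup norm of a function over the closed unit ball. -/
noncomputable def supNorm {X E : Type*} [NormedAddCommGroup X] [NormedAddCommGroup E]
    (P : X → E) : ℝ :=
  ⨆ x : {x : X // ‖x‖ ≤ 1}, ‖P x‖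

namespace PolarizationAux

/-- Sign attached to a boolean. -/
noncomputable def sgn (b : Bool) : ℂ := if b then 1 else -1

lemma norm_sgn (b : Bool) : ‖sgn b‖ = 1 := by cases b <;> simp [sgn]

lemma sgn_sq (b : Bool) : sgn b * sgn b = 1 := by cases b <;> simp [sgn]

open Finset in
/-- The key sign-sum computation. -/
lemma coeff_eq (k : ℕ) (f : Fin k → Fin k) :
    ∑ ε : Fin k → Bool, ((∏ j, sgn (ε j)) * ∏ i, sgn (ε (f i)))
      = if Function.Bijective f then ((2 : ℂ) ^ k) else 0 := by
  have key : ∀ ε : Fin k → Bool,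
      (∏ j, sgn (ε j)) * ∏ i, sgn (ε (f i))
        = ∏ j, (sgn (ε j) * sgn (ε j) ^ #{i : Fin k | f i = j}) := by
    intro ε
    rw [Finset.prod_mul_distrib]
    congr 1
    rw [← Finset.prod_fiberwise' Finset.univ f (fun j => sgn (ε j))]
    simp [Finset.prod_const]
  simp_rw [key]
  have factor : ∑ ε : Fin k → Bool, ∏ j, (sgn (ε j) * sgn (ε j) ^ #{i : Fin k | f i = j})
      = ∏ j : Fin k, ∑ b : Bool, (sgn b * sgn b ^ #{i : Fin k | f i = j}) := by
    rw [← Finset.sum_prod_piFinset (Finset.univ : Finset Bool)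
      (fun j b => sgn b * sgn b ^ #{i : Fin k | f i = j})]
    rw [Fintype.piFinset_univ]
  rw [factor]
  have hval : ∀ j : Fin k, ∑ b : Bool, (sgn b * sgn b ^ #{i : Fin k | f i = j})
      = 1 + (-1 : ℂ) ^ (#{i : Fin k | f i = j} + 1) := by
    intro j
    simp [sgn, Fintype.sum_bool, pow_succ, one_pow]
  simp_rw [hval]
  by_cases hf : Function.Bijective f
  · rw [if_pos hf]
    have hm : ∀ j : Fin k, #{i : Fin k | f i = j} = 1 := by
      intro j
      rw [Finset.card_eq_one]
      obtain ⟨i, hi⟩ := hf.surjective j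
      refine ⟨i, ?_⟩
      ext a
      simp only [Finset.mem_filter, Finset.mem_univ, true_and, Finset.mem_singleton]
      constructor
      · intro ha; exact hf.injective (ha.trans hi.symm)
      · rintro rfl; exact hi
    simp [hm]
    norm_num
  · rw [if_neg hf]
    have hsurj : ¬ Function.Surjective f := by
      intro h
      exact hf (Finite.injective_iff_bijective.mp
        (Finite.surjective_iff_bijective.mp h).injective)
    unfold Function.Surjective at hsurj
    push_neg at hsurj
    obtain ⟨j₀, hj₀⟩ := hsurj
    apply Finset.prod_eq_zero (Finset.mem_univ j₀)
    have : #{i : Fin k | f i = j₀} = 0 := by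
      rw [Finset.card_eq_zero]
      ext i
      simp only [Finset.mem_filter, Finset.mem_univ, true_and, Finset.notMem_empty,
        iff_false]
      exact fun h => hj₀ i h
    rw [this]
    norm_num

open Finset in
/-- Polarization identity. -/
lemma polar_identity {X : Type*} [NormedAddCommGroup X] [NormedSpace ℂ X] (k : ℕ)
    (T : ContinuousMultilinearMap ℂ (fun _ : Fin k => X) ℂ)
    (hsym : ∀ (σ : Equiv.Perm (Fin k)) (v : Fin k → X), T (v ∘ σ) = T v)
    (x : Fin k → X) :
    ∑ ε : Fin k → Bool, (∏ j, sgn (ε j)) * T (fun _ => ∑ j, sgn (ε j) • x j)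
      = ((2 ^ k * Nat.factorial k : ℕ) : ℂ) * T x := by
  have expand : ∀ ε : Fin k → Bool,
      T (fun _ => ∑ j, sgn (ε j) • x j)
        = ∑ f : Fin k → Fin k, (∏ i, sgn (ε (f i))) * T (fun i => x (f i)) := by
    intro ε
    have := T.toMultilinearMap.map_sum (fun (_ : Fin k) (j : Fin k) => sgn (ε j) • x j)
    simp only [ContinuousMultilinearMap.coe_coe] at this
    rw [show (fun _ : Fin k => ∑ j, sgn (ε j) • x j)
        = (fun i : Fin k => ∑ j, (fun (_ : Fin k) (j : Fin k) => sgn (ε j) • x j) i j) from rfl,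
      this]
    apply Finset.sum_congr rfl
    intro f _
    have := T.toMultilinearMap.map_smul_univ (fun i => sgn (ε (f i))) (fun i => x (f i))
    simp only [ContinuousMultilinearMap.coe_coe] at this
    rw [this, smul_eq_mul]
  simp_rw [expand, Finset.mul_sum]
  rw [Finset.sum_comm]
  have step : ∀ f : Fin k → Fin k,
      ∑ ε : Fin k → Bool, (∏ j, sgn (ε j)) * ((∏ i, sgn (ε (f i))) * T (fun i => x (f i)))
        = (if Function.Bijective f then ((2 : ℂ) ^ k) else 0) * T (fun i => x (f i)) := by
    intro f
    rw [← coeff_eq k f, Finset.sum_mul]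
    apply Finset.sum_congr rfl
    intro ε _
    ring
  simp_rw [step, ite_mul, zero_mul]
  classical
  rw [← Finset.sum_filter]
  have hbij : ∑ f ∈ Finset.univ.filter (fun f : Fin k → Fin k => Function.Bijective f),
      (2 : ℂ) ^ k * T (fun i => x (f i))
      = ∑ σ : Equiv.Perm (Fin k), (2 : ℂ) ^ k * T (fun i => x (σ i)) := by
    symm
    apply Finset.sum_bij (fun (σ : Equiv.Perm (Fin k)) _ => ⇑σ)
    · intro σ _
      exact Finset.mem_filter.mpr ⟨Finset.mem_univ _, σ.bijective⟩
    · intro σ₁ _ σ₂ _ h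
      exact Equiv.coe_fn_injective h
    · intro f hf
      have hb : Function.Bijective f := (Finset.mem_filter.mp hf).2
      exact ⟨Equiv.ofBijective f hb, Finset.mem_univ _, rfl⟩
    · intro σ _
      rfl
  rw [hbij]
  have hterm : ∀ σ : Equiv.Perm (Fin k), T (fun i => x (σ i)) = T x := fun σ => hsym σ x
  simp_rw [hterm]
  rw [Finset.sum_const, Finset.card_univ, Fintype.card_perm, Fintype.card_fin,
    nsmul_eq_mul]
  push_cast
  ring


end PolarizationAux

open PolarizationAux

/-- Polarization inequality: for a continuous symmetric `k`-linear map `T` on a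
complex Banach space with associated homogeneous polynomial `P`,
`‖T‖ ≤ (k^k / k!) ‖P‖`. -/
theorem polarization_inequality {X : Type*} [NormedAddCommGroup X] [NormedSpace ℂ X]
    [CompleteSpace X] (k : ℕ)
    (T : ContinuousMultilinearMap ℂ (fun _ : Fin k => X) ℂ)
    (hsym : ∀ (σ : Equiv.Perm (Fin k)) (v : Fin k → X), T (v ∘ σ) = T v)
    (P : X → ℂ) (hP : ∀ x, P x = T (fun _ => x)) :
    ‖T‖ ≤ ((k : ℝ) ^ k / (Nat.factorial k : ℝ)) * supNorm P := by
  classical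
  set S := supNorm P with hSdef
  have hS0 : 0 ≤ S := Real.iSup_nonneg fun x => norm_nonneg _
  have hbdd : BddAbove (Set.range fun x : {x : X // ‖x‖ ≤ 1} => ‖P x.1‖) := by
    refine ⟨‖T‖, ?_⟩
    rintro _ ⟨⟨z, hz⟩, rfl⟩
    simp only
    rw [hP]
    calc ‖T (fun _ => z)‖ ≤ ‖T‖ * ∏ _i : Fin k, ‖z‖ := T.le_opNorm _
      _ ≤ ‖T‖ * 1 := by
          refine mul_le_mul_of_nonneg_left ?_ (norm_nonneg (T : ContinuousMultilinearMap ℂ (fun _ : Fin k => X) ℂ))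
          rw [Finset.prod_const]
          exact pow_le_one₀ (norm_nonneg z) hz
      _ = ‖T‖ := mul_one _
  have hSle : ∀ z : X, ‖z‖ ≤ 1 → ‖P z‖ ≤ S := fun z hz => le_ciSup hbdd ⟨z, hz⟩
  have hPz : ∀ z : X, ‖P z‖ ≤ S * ‖z‖ ^ k := by
    intro z
    by_cases hz : z = 0
    · subst hz
      rcases Nat.eq_zero_or_pos k with hk | hk
      · subst hk; simpa using hSle 0 (by simp)
      · have h0 : P 0 = 0 := by
          rw [hP]
          exact T.map_coord_zero ⟨0, hk⟩ rfl
        rw [h0]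
        simp [hk.ne']
    · have hr : 0 < ‖z‖ := norm_pos_iff.mpr hz
      set u : X := ((‖z‖ : ℂ))⁻¹ • z with hudef
      have hcast : ((‖z‖ : ℝ) : ℂ) ≠ 0 := by
        exact_mod_cast hr.ne'
      have hu : ‖u‖ = 1 := by
        rw [hudef, norm_smul, norm_inv]
        rw [Complex.norm_real, Real.norm_of_nonneg (norm_nonneg z)]
        field_simp
      have hzu : z = ((‖z‖ : ℝ) : ℂ) • u := by
        rw [hudef, smul_inv_smul₀ hcast]
      have hkey : P z = ((‖z‖ : ℝ) : ℂ) ^ k * P u := by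
        rw [hP, hP]
        conv_lhs => rw [hzu]
        have := T.toMultilinearMap.map_smul_univ (fun _ : Fin k => ((‖z‖ : ℝ) : ℂ))
          (fun _ => u)
        simp only [ContinuousMultilinearMap.coe_coe] at this
        rw [this, Finset.prod_const, Finset.card_univ, Fintype.card_fin, smul_eq_mul]
      rw [hkey, norm_mul, norm_pow, Complex.norm_real,
        Real.norm_of_nonneg (norm_nonneg z)]
      rw [mul_comm]
      exact mul_le_mul_of_nonneg_right (hSle u hu.le) (by positivity)
  apply ContinuousMultilinearMap.opNorm_le_bound
  · positivity
  intro m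
  by_cases hm : ∃ i, m i = 0
  · obtain ⟨i, hi⟩ := hm
    rw [T.map_coord_zero i hi]
    have : (0:ℝ) ≤ ((k : ℝ) ^ k / (Nat.factorial k : ℝ)) * S * ∏ i, ‖m i‖ := by positivity
    simpa using this
  push_neg at hm
  set u : Fin k → X := fun i => ((‖m i‖ : ℝ) : ℂ)⁻¹ • m i with hudef
  have hui : ∀ i, ‖u i‖ = 1 := by
    intro i
    have hri : 0 < ‖m i‖ := norm_pos_iff.mpr (hm i)
    rw [hudef]
    simp only
    rw [norm_smul, norm_inv, Complex.norm_real, Real.norm_of_nonneg (norm_nonneg _)]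
    field_simp
  have hmu : ∀ i, m i = ((‖m i‖ : ℝ) : ℂ) • u i := by
    intro i
    have hri : ((‖m i‖ : ℝ) : ℂ) ≠ 0 := by
      exact_mod_cast (norm_pos_iff.mpr (hm i)).ne'
    rw [hudef]
    simp only
    rw [smul_inv_smul₀ hri]
  have hTm : ‖T m‖ = (∏ i, ‖m i‖) * ‖T u‖ := by
    conv_lhs => rw [show m = fun i => ((‖m i‖ : ℝ) : ℂ) • u i from funext hmu]
    have := T.toMultilinearMap.map_smul_univ (fun i => ((‖m i‖ : ℝ) : ℂ)) u
    simp only [ContinuousMultilinearMap.coe_coe] at this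
    rw [this, smul_eq_mul, norm_mul]
    congr 1
    rw [norm_prod]
    apply Finset.prod_congr rfl
    intro i _
    rw [Complex.norm_real, Real.norm_of_nonneg (norm_nonneg _)]
  -- key estimate on unit vectors
  have hkey : ((2 ^ k * Nat.factorial k : ℕ) : ℝ) * ‖T u‖
      ≤ (2 : ℝ) ^ k * ((k : ℝ) ^ k * S) := by
    have hid := polar_identity k T hsym u
    have h1 : ((2 ^ k * Nat.factorial k : ℕ) : ℝ) * ‖T u‖
        = ‖∑ ε : Fin k → Bool, (∏ j, sgn (ε j)) * T (fun _ => ∑ j, sgn (ε j) • u j)‖ := by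
      rw [hid, norm_mul, Complex.norm_natCast]
    rw [h1]
    calc ‖∑ ε : Fin k → Bool, (∏ j, sgn (ε j)) * T (fun _ => ∑ j, sgn (ε j) • u j)‖
        ≤ ∑ ε : Fin k → Bool, ‖(∏ j, sgn (ε j)) * T (fun _ => ∑ j, sgn (ε j) • u j)‖ :=
          norm_sum_le _ _
      _ ≤ ∑ _ε : Fin k → Bool, (k : ℝ) ^ k * S := by
          apply Finset.sum_le_sum
          intro ε _
          rw [norm_mul, norm_prod]
          have hc : ∏ j, ‖sgn (ε j)‖ = 1 := by
            simp only [norm_sgn, Finset.prod_const_one]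
          rw [hc, one_mul, ← hP]
          have hz : ‖∑ j, sgn (ε j) • u j‖ ≤ (k : ℝ) := by
            calc ‖∑ j, sgn (ε j) • u j‖ ≤ ∑ j, ‖sgn (ε j) • u j‖ := norm_sum_le _ _
              _ = ∑ _j : Fin k, (1 : ℝ) := by
                  apply Finset.sum_congr rfl
                  intro j _
                  rw [norm_smul, norm_sgn, hui, one_mul]
              _ = (k : ℝ) := by simp
          calc ‖P (∑ j, sgn (ε j) • u j)‖ ≤ S * ‖∑ j, sgn (ε j) • u j‖ ^ k := hPz _
            _ ≤ S * (k : ℝ) ^ k := by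
                apply mul_le_mul_of_nonneg_left _ hS0
                exact pow_le_pow_left₀ (norm_nonneg _) hz k
            _ = (k : ℝ) ^ k * S := mul_comm _ _
      _ = (2 : ℝ) ^ k * ((k : ℝ) ^ k * S) := by
          rw [Finset.sum_const, Finset.card_univ]
          simp [nsmul_eq_mul]
  have hTu : ‖T u‖ ≤ ((k : ℝ) ^ k / (Nat.factorial k : ℝ)) * S := by
    have hpos : (0 : ℝ) < ((2 ^ k * Nat.factorial k : ℕ) : ℝ) := by
      positivity
    push_cast at hkey
    rw [mul_assoc] at hkey
    have h2 : (0:ℝ) < 2 ^ k := pow_pos two_pos k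
    have h3 := le_of_mul_le_mul_left hkey h2
    rw [div_mul_eq_mul_div, le_div_iff₀ (by positivity : (0:ℝ) < (Nat.factorial k : ℝ))]
    nlinarith [h3]
  rw [hTm]
  calc (∏ i, ‖m i‖) * ‖T u‖ ≤ (∏ i, ‖m i‖) * (((k : ℝ) ^ k / (Nat.factorial k : ℝ)) * S) := by
        apply mul_le_mul_of_nonneg_left hTu
        exact Finset.prod_nonneg fun i _ => norm_nonneg _
    _ = ((k : ℝ) ^ k / (Nat.factorial k : ℝ)) * S * ∏ i, ‖m i‖ := by ring
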